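/- Let m, M > 0 with 2M > m. There exists a constant c > 0, depending only on m and M, such that for all nonzero ξ₁, ξ₂ ∈ ℝ² and all signs s₁, s₂ ∈ {+1, −1}, if either (a) s₁ = s₂, or (b) s₁ = −1, s₂ = +1 and ⟨ξ₁ − ξ₂⟩_m ≥ 2^{−10}·min(⟨ξ₁⟩_M, ⟨ξ₂⟩_M), then |μ^{s₁,s₂}(ξ₁, ξ₂)| ≥ c·(⟨ξ₁⟩·⟨ξ₂⟩/⟨ξ₁ − ξ₂⟩)·∠(s₁ξ₁, s₂ξ₂)². -/

import Mathlib

set_option maxHeartbeats 1000000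

noncomputable section

/-- ℝ² as a Euclidean space. -/
abbrev E2 := EuclideanSpace ℝ (Fin 2)

/-- The Japanese bracket `⟨ξ⟩_M = √(M² + |ξ|²)`. -/
def jb (M : ℝ) (ξ : E2) : ℝ := Real.sqrt (M ^ 2 + ‖ξ‖ ^ 2)

/-- The resonance function `μ^{s₁,s₂}(ξ₁,ξ₂) = ⟨ξ₁-ξ₂⟩_m + s₁⟨ξ₁⟩_M - s₂⟨ξ₂⟩_M`. -/
def resonance (m M s₁ s₂ : ℝ) (ξ₁ ξ₂ : E2) : ℝ :=
  jb m (ξ₁ - ξ₂) + s₁ * jb M ξ₁ - s₂ * jb M ξ₂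

namespace Res

def J (M x : ℝ) : ℝ := Real.sqrt (M ^ 2 + x ^ 2)

lemma J_nonneg (M x : ℝ) : 0 ≤ J M x := Real.sqrt_nonneg _

lemma J_sq (M x : ℝ) : (J M x) ^ 2 = M ^ 2 + x ^ 2 := Real.sq_sqrt (by positivity)

lemma le_J (M : ℝ) {x : ℝ} (hx : 0 ≤ x) : x ≤ J M x := by
  calc x = Real.sqrt (x ^ 2) := (Real.sqrt_sq hx).symm
  _ ≤ J M x := Real.sqrt_le_sqrt (by nlinarith [sq_nonneg M])

lemma M_le_J {M : ℝ} (hM : 0 ≤ M) (x : ℝ) : M ≤ J M x := by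
  calc M = Real.sqrt (M ^ 2) := (Real.sqrt_sq hM).symm
  _ ≤ J M x := Real.sqrt_le_sqrt (by nlinarith [sq_nonneg x])

lemma J_le_add {M x : ℝ} (hM : 0 ≤ M) (hx : 0 ≤ x) : J M x ≤ M + x := by
  have h : J M x ≤ Real.sqrt ((M + x) ^ 2) := Real.sqrt_le_sqrt (by nlinarith)
  rwa [Real.sqrt_sq (by positivity)] at h

lemma J_mono (M : ℝ) {x y : ℝ} (hx : 0 ≤ x) (hxy : x ≤ y) : J M x ≤ J M y :=
  Real.sqrt_le_sqrt (by nlinarith)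

lemma J_sub_le (M : ℝ) {a b : ℝ} (hb : 0 ≤ b) (hab : b ≤ a) : J M a ≤ J M b + (a - b) := by
  have h1 : b ≤ J M b := le_J M hb
  have h2 : M ^ 2 + a ^ 2 ≤ (J M b + (a - b)) ^ 2 := by nlinarith [J_sq M b]
  have h3 : J M a ≤ Real.sqrt ((J M b + (a - b)) ^ 2) := Real.sqrt_le_sqrt h2
  rwa [Real.sqrt_sq (by nlinarith [J_nonneg M b])] at h3

lemma J_mul_J {M a b : ℝ} (hM : 0 ≤ M) (ha : 0 ≤ a) (hb : 0 ≤ b) :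
    a * b + M ^ 2 ≤ J M a * J M b := by
  have h1 : J M a * J M b = Real.sqrt ((M ^ 2 + a ^ 2) * (M ^ 2 + b ^ 2)) := by
    rw [J, J, ← Real.sqrt_mul (by positivity)]
  rw [h1]
  calc a * b + M ^ 2 = Real.sqrt ((a * b + M ^ 2) ^ 2) := (Real.sqrt_sq (by positivity)).symm
  _ ≤ _ := Real.sqrt_le_sqrt (by nlinarith [sq_nonneg (a - b)])

lemma J_le_kappa {m : ℝ} (hm : 0 ≤ m) (d : ℝ) : J m d ≤ max m 1 * J 1 d := by
  have hκ : (0:ℝ) ≤ max m 1 := le_trans zero_le_one (le_max_right _ _)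
  have h1 : max m 1 * J 1 d = Real.sqrt ((max m 1) ^ 2 * (1 ^ 2 + d ^ 2)) := by
    rw [Real.sqrt_mul (sq_nonneg _), Real.sqrt_sq hκ]; rfl
  rw [h1]
  apply Real.sqrt_le_sqrt
  have hm1 : m ≤ max m 1 := le_max_left _ _
  have h11 : (1:ℝ) ≤ max m 1 := le_max_right _ _
  nlinarith [sq_nonneg d, mul_le_mul hm1 hm1 hm hκ, mul_le_mul h11 h11 zero_le_one hκ]

lemma one_le_J1 (x : ℝ) : 1 ≤ J 1 x := M_le_J zero_le_one x

lemma J1_le_two_max {x : ℝ} (hx : 0 ≤ x) : J 1 x ≤ 2 * max x 1 := by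
  have h1 : (1:ℝ) ≤ max x 1 := le_max_right _ _
  have h2 : x ≤ max x 1 := le_max_left _ _
  have h : J 1 x ≤ Real.sqrt ((2 * max x 1) ^ 2) := Real.sqrt_le_sqrt (by nlinarith)
  rwa [Real.sqrt_sq (by positivity)] at h

lemma jordan {θ : ℝ} (h0 : 0 ≤ θ) (hπ : θ ≤ Real.pi) :
    θ ^ 2 ≤ Real.pi ^ 2 / 2 * (1 - Real.cos θ) := by
  have h := Real.cos_le_one_sub_mul_cos_sq (x := θ) (by rwa [abs_of_nonneg h0])
  have hpi := Real.pi_pos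
  have h2 : 2 / Real.pi ^ 2 * θ ^ 2 ≤ 1 - Real.cos θ := by linarith
  calc θ ^ 2 = Real.pi ^ 2 / 2 * (2 / Real.pi ^ 2 * θ ^ 2) := by
        field_simp
  _ ≤ _ := by
        apply mul_le_mul_of_nonneg_left h2 (by positivity)


lemma J_abs_sub (M : ℝ) {a b : ℝ} (ha : 0 ≤ a) (hb : 0 ≤ b) :
    |J M a - J M b| ≤ |a - b| := by
  rcases le_total a b with h | h
  · have h1 := J_sub_le M ha h
    have h2 := J_mono M ha h
    rw [abs_of_nonpos (by linarith), abs_of_nonpos (by linarith)]; linarith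
  · have h1 := J_sub_le M hb h
    have h2 := J_mono M hb h
    rw [abs_of_nonneg (by linarith), abs_of_nonneg (by linarith)]; linarith


lemma JM_mul_le (M b : ℝ) (hb : 0 ≤ b) : J M b * b ≤ b^2 + M^2/2 := by
  have hsq : (J M b * b)^2 ≤ (b^2 + M^2/2)^2 := by nlinarith [J_sq M b, sq_nonneg (M^2/2)]
  have h := Real.sqrt_le_sqrt hsq
  rwa [Real.sqrt_sq (mul_nonneg (J_nonneg M b) hb), Real.sqrt_sq (by positivity)] at h

lemma bsq_sub_le (a b d p : ℝ) (ha : 0 < a) (ha1 : a < 1) (hb2 : 2 ≤ b) (hd : 0 ≤ d)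
    (hrel : d^2 = a^2 + b^2 - 2*p) (hp1 : -(a*b) ≤ p) (hp2 : p ≤ a*b) :
    b^2 - p ≤ b * d := by
  have hx0 : 0 ≤ b^2 - p := by nlinarith
  have e : (b*d)^2 = b^2*(a^2+b^2-2*p) := by rw [mul_pow, hrel]
  have hsq : (b^2-p)^2 ≤ (b*d)^2 := by nlinarith [mul_nonneg (by linarith : (0:ℝ) ≤ a*b - p) (by linarith : (0:ℝ) ≤ a*b + p)]
  have h := Real.sqrt_le_sqrt hsq
  rwa [Real.sqrt_sq hx0, Real.sqrt_sq (by positivity)] at h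

lemma mu_lower_case4 (m M a b d p : ℝ) (hm : 0 < m) (hM : 0 < M)
    (ha : 0 < a) (ha1 : a < 1) (hb : 0 < b) (hd : 0 ≤ d)
    (hrel : d^2 = a^2 + b^2 - 2*p) (hp1 : -(a*b) ≤ p) (hp2 : p ≤ a*b)
    (hbig : J M 1 + 1 ≤ b) :
    M^2/(J M 1 + 1)/2 ≤ J m d + J M a - J M b := by
  have hJM1 : (0:ℝ) < J M 1 + 1 := by nlinarith [J_nonneg M 1]
  set δ : ℝ := M^2/(J M 1 + 1) with hδdef
  have hδ0 : 0 < δ := by rw [hδdef]; positivity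
  have hδJM : δ * (J M 1 + 1) = M^2 := by rw [hδdef]; field_simp
  clear_value δ
  have hb2 : (2:ℝ) ≤ b := by
    have h1 : (1:ℝ) ≤ J M 1 := le_J M zero_le_one
    linarith
  have hbd2 := bsq_sub_le a b d p ha ha1 hb2 hd hrel hp1 hp2
  have hJMbb := JM_mul_le M b hb.le
  have hdJ : d ≤ J m d := le_J m hd
  have hid : (J M a - a) * (J M a + a) = M^2 := by linear_combination J_sq M a
  have hposa : 0 < J M a + a := by nlinarith [J_nonneg M a]
  have hpos2 : 0 < J M a - a := by nlinarith [sq_nonneg M]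
  have hδa : δ ≤ J M a - a := by
    have hsum : J M a + a ≤ J M 1 + 1 := add_le_add (J_mono M ha.le ha1.le) ha1.le
    have h1 : δ * (J M a + a) ≤ δ * (J M 1 + 1) := mul_le_mul_of_nonneg_left hsum hδ0.le
    nlinarith [hid, h1, hδJM]
  have hδb : M^2 ≤ δ * b :=
    calc M^2 = δ*(J M 1+1) := hδJM.symm
    _ ≤ δ*b := mul_le_mul_of_nonneg_left hbig hδ0.le
  have hμb : (δ/2)*b ≤ (J m d + J M a - J M b)*b := by
    have e0 : b^2 - p ≤ J m d * b := by
      calc b^2 - p ≤ b*d := hbd2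
      _ = d*b := by ring
      _ ≤ J m d * b := mul_le_mul_of_nonneg_right hdJ hb.le
    have e1 : δ*b ≤ (J M a - a)*b := mul_le_mul_of_nonneg_right hδa hb.le
    nlinarith [hJMbb, e0, e1, hδb]
  have := le_of_mul_le_mul_right hμb hb
  linarith

lemma lemA (m M : ℝ) (hm : 0 < m) (hM : 0 < M) :
    ∃ c₀ : ℝ, 0 < c₀ ∧ ∀ a b d p : ℝ, 0 < a → 0 < b → 0 ≤ d →
      d ^ 2 = a ^ 2 + b ^ 2 - 2 * p → |p| ≤ a * b →
      c₀ * (max a 1 * max b 1) * (a * b - p) ≤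
        (J m d + J M a - J M b) * (a * b) * J 1 d := by
  have hκ1 : (1:ℝ) ≤ max m 1 := le_max_right _ _
  have hκm : m ≤ max m 1 := le_max_left _ _
  have hκ0 : (0:ℝ) < max m 1 := lt_of_lt_of_le one_pos hκ1
  set κ := max m 1 with hκdef
  set R : ℝ := 2*M + 2 + m with hRdef
  have hR2 : (2:ℝ) ≤ R := by rw [hRdef]; linarith
  have hJM1 : (0:ℝ) < J M 1 + 1 := by nlinarith [J_nonneg M 1]
  set δ : ℝ := M^2 / (J M 1 + 1) with hδdef
  have hδ0 : 0 < δ := by rw [hδdef]; positivity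
  have hδJM : δ * (J M 1 + 1) = M^2 := by rw [hδdef]; field_simp
  clear_value δ
  refine ⟨min (min (m^2/(4*κ*R^2)) (1/(2*κ))) (min (1/2) (δ/8)), by positivity, ?_⟩
  set c₀ : ℝ := min (min (m^2/(4*κ*R^2)) (1/(2*κ))) (min (1/2) (δ/8)) with hc0def
  have hc₀1 : c₀ ≤ m^2/(4*κ*R^2) := le_trans (min_le_left _ _) (min_le_left _ _)
  have hc₀2 : c₀ ≤ 1/(2*κ) := le_trans (min_le_left _ _) (min_le_right _ _)
  have hc₀3 : c₀ ≤ 1/2 := le_trans (min_le_right _ _) (min_le_left _ _)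
  have hc₀4 : c₀ ≤ δ/8 := le_trans (min_le_right _ _) (min_le_right _ _)
  have hc₀0 : 0 < c₀ := by positivity
  clear_value c₀
  intro a b d p ha hb hd hrel hcs
  obtain ⟨hp1, hp2⟩ := abs_le.mp hcs
  have hN0 : 0 ≤ a*b - p := by linarith
  have hN2 : a*b - p ≤ 2*(a*b) := by linarith
  have habd : |a - b| ≤ d := by
    have h1 : (a-b)^2 ≤ d^2 := by nlinarith
    have h2 := Real.sqrt_le_sqrt h1
    rwa [Real.sqrt_sq_eq_abs, Real.sqrt_sq hd] at h2
  have hdJ : d < J m d := by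
    have h0 : d = Real.sqrt (d^2) := (Real.sqrt_sq hd).symm
    rw [h0, J]
    exact Real.sqrt_lt_sqrt (sq_nonneg d) (by nlinarith)
  have hsubd : |J M a - J M b| ≤ d := le_trans (J_abs_sub M ha.le hb.le) habd
  have hsubsq : (J M a - J M b)^2 ≤ (a - b)^2 := by
    have h := J_abs_sub M ha.le hb.le
    calc (J M a - J M b)^2 = |J M a - J M b|^2 := (sq_abs _).symm
    _ ≤ |a-b|^2 := pow_le_pow_left₀ (abs_nonneg _) h 2
    _ = (a-b)^2 := sq_abs _
  set μ := J m d + J M a - J M b with hμdef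
  have hμpos : 0 < μ := by
    have h1 : J M b - J M a ≤ |J M a - J M b| := by
      rw [abs_sub_comm]; exact le_abs_self _
    simp only [hμdef]; linarith
  have hprod : μ * (J m d - J M a + J M b) = m^2 + d^2 - (J M a - J M b)^2 := by
    simp only [hμdef]; linear_combination J_sq m d
  have hD2 : J m d - J M a + J M b ≤ 2 * J m d := by
    have h1 : J M b - J M a ≤ |J M a - J M b| := by
      rw [abs_sub_comm]; exact le_abs_self _
    linarith
  have hkey : m^2 + 2*(a*b - p) ≤ μ * (2 * J m d) := by
    have h2 := mul_le_mul_of_nonneg_left hD2 hμpos.le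
    rw [hprod] at h2
    nlinarith [hsubsq, h2]
  have main2 : (m^2 + 2*(a*b-p)) * (a*b) ≤ (2*κ) * (μ * (a*b) * J 1 d) := by
    have h1 : μ * (2 * J m d) ≤ μ * (2 * (κ * J 1 d)) := by
      apply mul_le_mul_of_nonneg_left _ hμpos.le
      have := J_le_kappa hm.le d; linarith
    have h2 : m^2 + 2*(a*b-p) ≤ μ * (2*(κ * J 1 d)) := le_trans hkey h1
    calc (m^2 + 2*(a*b-p)) * (a*b) ≤ (μ * (2*(κ * J 1 d))) * (a*b) :=
          mul_le_mul_of_nonneg_right h2 (by positivity)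
    _ = (2*κ) * (μ * (a*b) * J 1 d) := by ring
  by_cases hC1 : a ≤ R ∧ b ≤ R
  · suffices hneed : (2*κ) * (c₀ * (max a 1 * max b 1) * (a*b - p)) ≤
        (m^2 + 2*(a*b-p))*(a*b) by
      have h := le_trans hneed main2
      exact le_of_mul_le_mul_left h (by positivity)
    have hma : max a 1 ≤ R := max_le hC1.1 (by linarith)
    have hmb : max b 1 ≤ R := max_le hC1.2 (by linarith)
    have hma0 : (0:ℝ) ≤ max a 1 := le_trans zero_le_one (le_max_right _ _)
    have hG : max a 1 * max b 1 ≤ R * R :=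
      mul_le_mul hma hmb (le_trans zero_le_one (le_max_right _ _)) (by linarith)
    have hc' : c₀ * (4*κ*R^2) ≤ m^2 := by
      have := (le_div_iff₀ (by positivity : (0:ℝ) < 4*κ*R^2)).mp hc₀1
      linarith
    have e1 : c₀ * (max a 1 * max b 1) * (a*b-p) ≤ c₀ * (R*R) * (2*(a*b)) := by
      apply mul_le_mul (mul_le_mul_of_nonneg_left hG hc₀0.le) hN2 hN0 (by positivity)
    calc (2*κ) * (c₀ * (max a 1 * max b 1) * (a*b - p))
        ≤ (2*κ) * (c₀*(R*R)*(2*(a*b))) := mul_le_mul_of_nonneg_left e1 (by positivity)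
    _ = (c₀*(4*κ*R^2))*(a*b) := by ring
    _ ≤ m^2*(a*b) := mul_le_mul_of_nonneg_right hc' (by positivity)
    _ ≤ (m^2 + 2*(a*b-p))*(a*b) := by nlinarith [mul_nonneg hN0 (mul_pos ha hb).le]
  · by_cases hC2 : 1 ≤ a ∧ 1 ≤ b
    · suffices hneed : (2*κ) * (c₀ * (max a 1 * max b 1) * (a*b - p)) ≤
          (m^2 + 2*(a*b-p))*(a*b) by
        have h := le_trans hneed main2
        exact le_of_mul_le_mul_left h (by positivity)
      rw [max_eq_left hC2.1, max_eq_left hC2.2]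
      have hc' : c₀ * (2*κ) ≤ 1 := by
        have := (le_div_iff₀ (by positivity : (0:ℝ) < 2*κ)).mp hc₀2
        linarith
      calc (2*κ)*(c₀*(a*b)*(a*b-p)) = (c₀*(2*κ))*((a*b)*(a*b-p)) := by ring
      _ ≤ 1*((a*b)*(a*b-p)) :=
          mul_le_mul_of_nonneg_right hc' (mul_nonneg (by positivity) hN0)
      _ ≤ (m^2 + 2*(a*b-p))*(a*b) := by
          nlinarith [mul_nonneg (mul_pos ha hb).le hN0, mul_nonneg (sq_nonneg m) (mul_pos ha hb).le]
    · rcases not_and_or.mp hC1 with hA | hB <;> rcases not_and_or.mp hC2 with h1a | h1b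
      · exact absurd (le_trans (not_le.mp h1a).le (by linarith)) hA
      · -- R < a, b < 1 : case 3
        have hRa := not_le.mp hA
        have hb1 := not_le.mp h1b
        have hda : a - b ≤ d := le_trans (le_abs_self _) habd
        have hμa : a ≤ μ := by
          have h1 := le_J M ha.le
          have h2 := J_le_add hM.le hb.le
          simp only [hμdef]; linarith [hdJ.le]
        rw [max_eq_left (by linarith : (1:ℝ) ≤ a), max_eq_right hb1.le]
        have hJ1d1 : 1 ≤ J 1 d := one_le_J1 d
        calc c₀ * (a*1) * (a*b-p) ≤ (1/2) * (a*1) * (2*(a*b)) := by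
              apply mul_le_mul (mul_le_mul_of_nonneg_right hc₀3 (by positivity)) hN2 hN0
                (by positivity)
        _ = a * (a*b) := by ring
        _ ≤ μ * (a*b) := mul_le_mul_of_nonneg_right hμa (by positivity)
        _ = μ * (a*b) * 1 := by ring
        _ ≤ μ * (a*b) * J 1 d :=
            mul_le_mul_of_nonneg_left hJ1d1 (mul_nonneg (by linarith) (by positivity))
      · -- R < b, a < 1 : case 4
        have hRb := not_le.mp hB
        have ha1 := not_le.mp h1a
        have hdb : b - a ≤ d := by
          have h1 : b - a ≤ |a - b| := by rw [abs_sub_comm]; exact le_abs_self _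
          linarith
        have hRJ : J M 1 + 1 ≤ R := by
          have := J_le_add hM.le zero_le_one; rw [hRdef]; linarith
        have hμδ : δ/2 ≤ μ := by
          have h := mu_lower_case4 m M a b d p hm hM ha ha1 hb hd hrel hp1 hp2 (by linarith)
          rw [hδdef]; simp only [hμdef]; linarith
        have hb2 : (2:ℝ) ≤ b := by linarith
        rw [max_eq_right ha1.le, max_eq_left (by linarith : (1:ℝ) ≤ b)]
        have hbd : b/2 ≤ J 1 d := by
          have := le_J 1 hd; linarith
        calc c₀*(1*b)*(a*b-p) ≤ (δ/8)*(1*b)*(2*(a*b)) := by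
              apply mul_le_mul (mul_le_mul_of_nonneg_right hc₀4 (by positivity)) hN2 hN0
                (by positivity)
        _ = (δ/2)*(a*b)*(b/2) := by ring
        _ ≤ μ*(a*b)*(J 1 d) := by
            apply mul_le_mul (mul_le_mul_of_nonneg_right hμδ (by positivity)) hbd
              (by positivity) (mul_nonneg (by linarith) (by positivity))
      · exact absurd (le_trans (not_le.mp h1b).le (by linarith)) hB


lemma P_lower (M a b : ℝ) (hM : 0 < M) (ha : 0 < a) (hb : 0 < b) (hb1 : b < 1)
    (haM : M ≤ a) : M^2 * a ≤ (J M a * J M b - a*b) * (2*M+3) := by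
  have hsq2 : (J M a * J M b)^2 = (M^2+a^2)*(M^2+b^2) := by
    rw [mul_pow, J_sq, J_sq]
  have hP0 : 0 ≤ J M a * J M b - a*b := by nlinarith [J_mul_J hM.le ha.le hb.le, sq_nonneg M]
  have hup : J M a * J M b + a*b ≤ (2*M+3)*a := by
    have h1 : J M a ≤ 2*a := le_trans (J_le_add hM.le ha.le) (by linarith)
    have h2 : J M b ≤ M+1 := le_trans (J_le_add hM.le hb.le) (by linarith)
    have h3 : J M a * J M b ≤ (2*a)*(M+1) :=
      mul_le_mul h1 h2 (J_nonneg M b) (by linarith)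
    nlinarith
  have hkey : M^2*a^2 ≤ (J M a * J M b - a*b) * ((2*M+3)*a) := by
    have hP2 : (J M a * J M b - a*b) * (J M a * J M b + a*b)
        = (M^2+a^2)*(M^2+b^2) - (a*b)^2 := by linear_combination hsq2
    nlinarith [mul_le_mul_of_nonneg_left hup hP0, hP2, sq_nonneg (M*b), sq_nonneg (M^2)]
  apply le_of_mul_le_mul_right _ ha
  calc M^2*a*a = M^2*a^2 := by ring
  _ ≤ (J M a * J M b - a*b)*((2*M+3)*a) := hkey
  _ = (J M a * J M b - a*b)*(2*M+3)*a := by ring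

lemma lemB (m M : ℝ) (hm : 0 < m) (hM : 0 < M) (hmM : m < 2*M) :
    ∃ c₀ : ℝ, 0 < c₀ ∧ ∀ a b d p : ℝ, 0 < a → 0 < b → 0 ≤ d → b ≤ a →
      d ^ 2 = a ^ 2 + b ^ 2 - 2 * p → |p| ≤ a * b → J M b ≤ 1024 * J m d →
      c₀ * (max a 1 * max b 1) * (a * b + p) ≤
        (J M a + J M b - J m d) * (a * b) * J 1 d := by
  have hκ1 : (1:ℝ) ≤ max m 1 := le_max_right _ _
  have hκm : m ≤ max m 1 := le_max_left _ _
  have hκ0 : (0:ℝ) < max m 1 := lt_of_lt_of_le one_pos hκ1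
  set κ := max m 1 with hκdef
  have h4M : 0 < 4*M^2 - m^2 := by nlinarith
  set Q : ℝ := 1 + M + 2*m^2*(2*M+3)/M^2 with hQdef
  have hQaux : 0 ≤ 2*m^2*(2*M+3)/M^2 := by positivity
  have hQ1 : (1:ℝ) ≤ Q := by rw [hQdef]; linarith
  have hQM : M ≤ Q := by rw [hQdef]; linarith
  have hQ0 : (0:ℝ) < Q := lt_of_lt_of_le one_pos hQ1
  set β : ℝ := M^2/(2*(2*M+3)) with hβdef
  have hβ0 : 0 < β := by rw [hβdef]; positivity
  have hβ2 : β*(2*(2*M+3)) = M^2 := by rw [hβdef]; field_simp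
  have hβQm : m^2 ≤ β*Q := by
    have e : β*(2*m^2*(2*M+3)/M^2) = m^2 := by rw [hβdef]; field_simp
    have h1 : 2*m^2*(2*M+3)/M^2 ≤ Q := by rw [hQdef]; linarith
    calc m^2 = β*(2*m^2*(2*M+3)/M^2) := e.symm
    _ ≤ β*Q := mul_le_mul_of_nonneg_left h1 hβ0.le
  have hβM : β ≤ 3*M^2 := by nlinarith [hβ2, hβ0]
  clear_value Q β
  have hc1pos : (0:ℝ) < 1/(1025*κ) := by positivity
  have hc2pos : (0:ℝ) < (4*M^2-m^2)/(4100*κ*Q) := div_pos h4M (by positivity)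
  have hc3pos : (0:ℝ) < β/(4100*κ) := by positivity
  refine ⟨min (min (1/(1025*κ)) ((4*M^2-m^2)/(4100*κ*Q))) (β/(4100*κ)),
    lt_min (lt_min hc1pos hc2pos) hc3pos, ?_⟩
  set c₀ : ℝ := min (min (1/(1025*κ)) ((4*M^2-m^2)/(4100*κ*Q))) (β/(4100*κ)) with hc0def
  have hc₀1 : c₀ ≤ 1/(1025*κ) := le_trans (min_le_left _ _) (min_le_left _ _)
  have hc₀2 : c₀ ≤ (4*M^2-m^2)/(4100*κ*Q) := le_trans (min_le_left _ _) (min_le_right _ _)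
  have hc₀3 : c₀ ≤ β/(4100*κ) := min_le_right _ _
  have hc₀0 : 0 < c₀ := lt_min (lt_min hc1pos hc2pos) hc3pos
  clear_value c₀
  intro a b d p ha hb hd hba hrel hcs hcond
  obtain ⟨hp1, hp2⟩ := abs_le.mp hcs
  have hN0 : 0 ≤ a*b + p := by linarith
  have hN2 : a*b + p ≤ 2*(a*b) := by linarith
  have habd : a - b ≤ d := by
    have h1 : (a-b)^2 ≤ d^2 := by nlinarith [hp2]
    have h2 := Real.sqrt_le_sqrt h1
    rwa [Real.sqrt_sq (by linarith), Real.sqrt_sq hd] at h2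
  have hdJ : d ≤ J m d := le_J m hd
  have hJJ := J_mul_J hM.le ha.le hb.le
  set ν := J M a + J M b - J m d with hνdef
  set S := J M a + J M b + J m d with hSdef
  have hid : ν * S = 2*M^2 - m^2 + 2*p + 2*(J M a * J M b) := by
    simp only [hνdef, hSdef]
    linear_combination J_sq M a + J_sq M b - J_sq m d - hrel
  have hνS : 4*M^2 - m^2 + 2*(a*b+p) ≤ ν*S := by rw [hid]; linarith
  have hS0 : 0 < S := by
    simp only [hSdef]
    linarith [M_le_J hM.le a, M_le_J hM.le b, J_nonneg m d]
  have hνpos : 0 < ν := by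
    rcases lt_or_ge 0 ν with h | h
    · exact h
    · exfalso
      have h5 := mul_le_mul_of_nonneg_right h hS0.le
      rw [zero_mul] at h5
      linarith [hνS, hN0, h4M]
  have hS : S ≤ 2050 * J m d := by
    simp only [hSdef]
    have h1 : J M a ≤ J M b + (a-b) := J_sub_le M hb.le hba
    linarith
  have hfin : ∀ X : ℝ, X ≤ ν*S →
      (2050*κ)*(c₀*(max a 1 * max b 1)*(a*b+p)) ≤ X*(a*b) →
      c₀*(max a 1 * max b 1)*(a*b+p) ≤ ν*(a*b)*J 1 d := by
    intro X hX hneed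
    have hν2 : ν*S ≤ ν*(2050*(κ*J 1 d)) := by
      apply mul_le_mul_of_nonneg_left _ hνpos.le
      have hk := J_le_kappa hm.le d
      linarith
    have h3 : X*(a*b) ≤ (2050*κ)*(ν*(a*b)*J 1 d) := by
      calc X*(a*b) ≤ (ν*(2050*(κ*J 1 d)))*(a*b) :=
            mul_le_mul_of_nonneg_right (le_trans hX hν2) (by positivity)
      _ = (2050*κ)*(ν*(a*b)*J 1 d) := by ring
    exact le_of_mul_le_mul_left (le_trans hneed h3) (by positivity)
  by_cases hC : 1 ≤ b
  · refine hfin (4*M^2 - m^2 + 2*(a*b+p)) hνS ?_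
    rw [max_eq_left (le_trans hC hba), max_eq_left hC]
    have hc' : c₀*(1025*κ) ≤ 1 := by
      have := (le_div_iff₀ (by positivity : (0:ℝ) < 1025*κ)).mp hc₀1
      linarith
    calc (2050*κ)*(c₀*(a*b)*(a*b+p)) = (c₀*(1025*κ))*(2*((a*b)*(a*b+p))) := by ring
    _ ≤ 1*(2*((a*b)*(a*b+p))) :=
        mul_le_mul_of_nonneg_right hc' (by positivity)
    _ ≤ (4*M^2-m^2+2*(a*b+p))*(a*b) := by
        linarith [mul_nonneg h4M.le (by positivity : (0:ℝ) ≤ a*b)]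
  · have hCb := not_le.mp hC
    by_cases hCa : a ≤ Q
    · refine hfin (4*M^2 - m^2 + 2*(a*b+p)) hνS ?_
      rw [max_eq_right hCb.le]
      have hmaQ : max a 1 ≤ Q := max_le hCa hQ1
      have hc' : c₀*(4100*κ*Q) ≤ 4*M^2-m^2 := by
        have := (le_div_iff₀ (by positivity : (0:ℝ) < 4100*κ*Q)).mp hc₀2
        linarith
      calc (2050*κ)*(c₀*(max a 1 * 1)*(a*b+p)) ≤ (2050*κ)*(c₀*Q*(2*(a*b))) := by
            apply mul_le_mul_of_nonneg_left _ (by positivity)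
            apply mul_le_mul (mul_le_mul_of_nonneg_left (by simpa using hmaQ) hc₀0.le) hN2 hN0
              (by positivity)
      _ = (c₀*(4100*κ*Q))*(a*b) := by ring
      _ ≤ (4*M^2-m^2)*(a*b) := mul_le_mul_of_nonneg_right hc' (by positivity)
      _ ≤ (4*M^2-m^2+2*(a*b+p))*(a*b) := by
          linarith [mul_nonneg hN0 (by positivity : (0:ℝ) ≤ a*b)]
    · have hQa := not_le.mp hCa
      have haM : M ≤ a := by linarith
      have ha1 : (1:ℝ) ≤ a := by linarith
      have hPa := P_lower M a b hM ha hb hCb haM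
      have h2βa : 2*β*a ≤ J M a * J M b - a*b := by
        apply le_of_mul_le_mul_right _ (by linarith : (0:ℝ) < 2*M+3)
        calc (2*β*a)*(2*M+3) = (β*(2*(2*M+3)))*a := by ring
        _ = M^2*a := by rw [hβ2]
        _ ≤ (J M a * J M b - a*b)*(2*M+3) := hPa
      have hX : β*(1+a) + 2*(a*b+p) ≤ ν*S := by
        rw [hid]
        have hβa : m^2 ≤ β*a :=
          le_trans hβQm (mul_le_mul_of_nonneg_left hQa.le hβ0.le)
        linarith [hJJ, h2βa, hβa, hβM]
      refine hfin _ hX ?_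
      rw [max_eq_left ha1, max_eq_right hCb.le]
      have hc' : c₀*(4100*κ) ≤ β := by
        have := (le_div_iff₀ (by positivity : (0:ℝ) < 4100*κ)).mp hc₀3
        linarith
      calc (2050*κ)*(c₀*(a*1)*(a*b+p)) ≤ (2050*κ)*(c₀*a*(2*(a*b))) := by
            apply mul_le_mul_of_nonneg_left _ (by positivity)
            apply mul_le_mul (le_of_eq (by ring)) hN2 hN0 (by positivity)
      _ = (c₀*(4100*κ))*(a*(a*b)) := by ring
      _ ≤ β*(a*(a*b)) := mul_le_mul_of_nonneg_right hc' (by positivity)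
      _ ≤ (β*(1+a)+2*(a*b+p))*(a*b) := by
          linarith [mul_nonneg (mul_nonneg hβ0.le ha.le) hb.le,
            mul_nonneg hN0 (by positivity : (0:ℝ) ≤ a*b)]


lemma angle_bound (x y : E2) :
    (InnerProductGeometry.angle x y) ^ 2
      ≤ Real.pi ^ 2 / 2 * (1 - (inner ℝ x y : ℝ) / (‖x‖ * ‖y‖)) := by
  have h0 := InnerProductGeometry.angle_nonneg x y
  have hπ := InnerProductGeometry.angle_le_pi x y
  have hcos := InnerProductGeometry.cos_angle x y
  have h := jordan h0 hπ
  rw [hcos] at h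
  exact h

lemma assemble (c₀ : ℝ) {a b d q ν z : ℝ} (θ : ℝ)
    (hc₀ : 0 < c₀) (ha : 0 < a) (hb : 0 < b)
    (hθ : θ ^ 2 ≤ Real.pi ^ 2 / 2 * (1 - q / (a * b)))
    (hq : q ≤ a * b)
    (hνz : ν ≤ z)
    (hsc : c₀ * (max a 1 * max b 1) * (a * b - q) ≤ ν * (a * b) * J 1 d) :
    c₀ / (2 * Real.pi ^ 2) * (J 1 a * J 1 b / J 1 d) * θ ^ 2 ≤ z := by
  have hπ := Real.pi_pos
  have hJd : (0:ℝ) < J 1 d := lt_of_lt_of_le one_pos (one_le_J1 d)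
  have hJa : (0:ℝ) < J 1 a := lt_of_lt_of_le one_pos (one_le_J1 a)
  have hJb : (0:ℝ) < J 1 b := lt_of_lt_of_le one_pos (one_le_J1 b)
  have hfac : 0 ≤ c₀ / (2 * Real.pi ^ 2) * (J 1 a * J 1 b / J 1 d) := by positivity
  have step1 : c₀ / (2 * Real.pi ^ 2) * (J 1 a * J 1 b / J 1 d) * θ ^ 2
      ≤ c₀ / (2 * Real.pi ^ 2) * (J 1 a * J 1 b / J 1 d)
        * (Real.pi ^ 2 / 2 * (1 - q / (a * b))) :=
    mul_le_mul_of_nonneg_left hθ hfac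
  have heq : c₀ / (2 * Real.pi ^ 2) * (J 1 a * J 1 b / J 1 d)
        * (Real.pi ^ 2 / 2 * (1 - q / (a * b)))
      = (c₀ * (J 1 a * J 1 b) * (a * b - q)) / (4 * J 1 d * (a * b)) := by
    field_simp
    ring
  have step2 : (c₀ * (J 1 a * J 1 b) * (a * b - q)) / (4 * J 1 d * (a * b)) ≤ z := by
    rw [div_le_iff₀ (by positivity)]
    have hN0 : 0 ≤ a * b - q := by linarith
    have h2a : J 1 a ≤ 2 * max a 1 := J1_le_two_max ha.le
    have h2b : J 1 b ≤ 2 * max b 1 := J1_le_two_max hb.le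
    have e1 : c₀ * (J 1 a * J 1 b) * (a * b - q)
        ≤ c₀ * (2 * max a 1 * (2 * max b 1)) * (a * b - q) := by
      apply mul_le_mul_of_nonneg_right _ hN0
      exact mul_le_mul_of_nonneg_left
        (mul_le_mul h2a h2b (J_nonneg 1 b) (by positivity)) hc₀.le
    have e4 : ν * (a * b) * J 1 d ≤ z * (a * b) * J 1 d :=
      mul_le_mul_of_nonneg_right
        (mul_le_mul_of_nonneg_right hνz (by positivity)) (J_nonneg 1 d)
    calc c₀ * (J 1 a * J 1 b) * (a * b - q)
        ≤ c₀ * (2 * max a 1 * (2 * max b 1)) * (a * b - q) := e1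
    _ = 4 * (c₀ * (max a 1 * max b 1) * (a * b - q)) := by ring
    _ ≤ 4 * (ν * (a * b) * J 1 d) := by linarith
    _ ≤ 4 * (z * (a * b) * J 1 d) := by linarith
    _ = z * (4 * J 1 d * (a * b)) := by ring
  exact le_trans (le_trans step1 (le_of_eq heq)) step2


end Res

theorem stmt1 (m M : ℝ) (hm : 0 < m) (hM : 0 < M) (hmM : m < 2 * M) :
    ∃ c : ℝ, 0 < c ∧ ∀ (ξ₁ ξ₂ : E2) (s₁ s₂ : ℝ),
      ξ₁ ≠ 0 → ξ₂ ≠ 0 →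
      (s₁ = 1 ∨ s₁ = -1) → (s₂ = 1 ∨ s₂ = -1) →
      (s₁ = s₂ ∨
        (s₁ = -1 ∧ s₂ = 1 ∧
          (2 : ℝ) ^ (-10 : ℤ) * min (jb M ξ₁) (jb M ξ₂) ≤ jb m (ξ₁ - ξ₂))) →
      c * (jb 1 ξ₁ * jb 1 ξ₂ / jb 1 (ξ₁ - ξ₂)) *
          (InnerProductGeometry.angle (s₁ • ξ₁) (s₂ • ξ₂)) ^ 2 ≤
        |resonance m M s₁ s₂ ξ₁ ξ₂| := by
  obtain ⟨cA, hcA, HA⟩ := Res.lemA m M hm hM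
  obtain ⟨cB, hcB, HB⟩ := Res.lemB m M hm hM hmM
  have hπ := Real.pi_pos
  refine ⟨min cA cB / (2 * Real.pi ^ 2), by positivity, ?_⟩
  intro ξ₁ ξ₂ s₁ s₂ hξ₁ hξ₂ hs₁ hs₂ hcase
  set c₀ := min cA cB with hc₀def
  have hc₀ : 0 < c₀ := lt_min hcA hcB
  have ha : (0:ℝ) < ‖ξ₁‖ := norm_pos_iff.mpr hξ₁
  have hb : (0:ℝ) < ‖ξ₂‖ := norm_pos_iff.mpr hξ₂
  have hd : (0:ℝ) ≤ ‖ξ₁ - ξ₂‖ := norm_nonneg _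
  have hcs : |(inner ℝ ξ₁ ξ₂ : ℝ)| ≤ ‖ξ₁‖ * ‖ξ₂‖ := abs_real_inner_le_norm ξ₁ ξ₂
  obtain ⟨hp1, hp2⟩ := abs_le.mp hcs
  have hrel : ‖ξ₁ - ξ₂‖ ^ 2 = ‖ξ₁‖ ^ 2 + ‖ξ₂‖ ^ 2 - 2 * (inner ℝ ξ₁ ξ₂ : ℝ) := by
    rw [norm_sub_sq_real]; ring
  have hres : resonance m M s₁ s₂ ξ₁ ξ₂
      = Res.J m ‖ξ₁ - ξ₂‖ + s₁ * Res.J M ‖ξ₁‖ - s₂ * Res.J M ‖ξ₂‖ := rfl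
  have hG0 : (0:ℝ) ≤ max ‖ξ₁‖ 1 * max ‖ξ₂‖ 1 :=
    mul_nonneg (le_trans zero_le_one (le_max_right _ _))
      (le_trans zero_le_one (le_max_right _ _))
  rcases hs₁ with rfl | rfl <;> rcases hs₂ with rfl | rfl
  · -- (1, 1)
    rw [one_smul, one_smul]
    have hθ := Res.angle_bound ξ₁ ξ₂
    have h := HA ‖ξ₁‖ ‖ξ₂‖ ‖ξ₁ - ξ₂‖ (inner ℝ ξ₁ ξ₂ : ℝ) ha hb hd hrel hcs
    have hN0 : (0:ℝ) ≤ ‖ξ₁‖ * ‖ξ₂‖ - (inner ℝ ξ₁ ξ₂ : ℝ) := by linarith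
    have hsc : c₀ * (max ‖ξ₁‖ 1 * max ‖ξ₂‖ 1) * (‖ξ₁‖ * ‖ξ₂‖ - (inner ℝ ξ₁ ξ₂ : ℝ))
        ≤ (Res.J m ‖ξ₁ - ξ₂‖ + Res.J M ‖ξ₁‖ - Res.J M ‖ξ₂‖) * (‖ξ₁‖ * ‖ξ₂‖)
          * Res.J 1 ‖ξ₁ - ξ₂‖ := by
      refine le_trans ?_ h
      exact mul_le_mul_of_nonneg_right
        (mul_le_mul_of_nonneg_right (min_le_left cA cB) hG0) hN0
    have hνz : Res.J m ‖ξ₁ - ξ₂‖ + Res.J M ‖ξ₁‖ - Res.J M ‖ξ₂‖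
        ≤ |resonance m M 1 1 ξ₁ ξ₂| := by
      have he : Res.J m ‖ξ₁ - ξ₂‖ + Res.J M ‖ξ₁‖ - Res.J M ‖ξ₂‖
          = resonance m M 1 1 ξ₁ ξ₂ := by rw [hres]; ring
      rw [he]; exact le_abs_self _
    exact Res.assemble c₀ _ hc₀ ha hb hθ hp2 hνz hsc
  · -- (1, -1) impossible
    exfalso
    rcases hcase with heq | ⟨heq, _, _⟩ <;> norm_num at heq
  · -- (-1, 1)
    rcases hcase with heq | ⟨_, _, hcond⟩
    · exfalso; norm_num at heq
    have h2 : ((2:ℝ) ^ (-10 : ℤ)) = 1/1024 := by norm_num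
    rw [h2] at hcond
    have hθ0 := Res.angle_bound (-ξ₁) ξ₂
    have hθ : (InnerProductGeometry.angle ((-1 : ℝ) • ξ₁) ((1:ℝ) • ξ₂)) ^ 2
        ≤ Real.pi ^ 2 / 2 * (1 - (-(inner ℝ ξ₁ ξ₂ : ℝ)) / (‖ξ₁‖ * ‖ξ₂‖)) := by
      rw [neg_one_smul, one_smul]
      rwa [inner_neg_left, norm_neg] at hθ0
    have hq : -(inner ℝ ξ₁ ξ₂ : ℝ) ≤ ‖ξ₁‖ * ‖ξ₂‖ := by linarith
    have hνz : Res.J M ‖ξ₁‖ + Res.J M ‖ξ₂‖ - Res.J m ‖ξ₁ - ξ₂‖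
        ≤ |resonance m M (-1) 1 ξ₁ ξ₂| := by
      have he : Res.J M ‖ξ₁‖ + Res.J M ‖ξ₂‖ - Res.J m ‖ξ₁ - ξ₂‖
          = -(resonance m M (-1) 1 ξ₁ ξ₂) := by rw [hres]; ring
      rw [he]; exact neg_le_abs _
    rcases le_total ‖ξ₂‖ ‖ξ₁‖ with hba | hab
    · have hmin : min (jb M ξ₁) (jb M ξ₂) = Res.J M ‖ξ₂‖ :=
        min_eq_right (Res.J_mono M hb.le hba)
      rw [hmin] at hcond
      have hcond2 : Res.J M ‖ξ₂‖ ≤ 1024 * Res.J m ‖ξ₁ - ξ₂‖ := by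
        have : jb m (ξ₁ - ξ₂) = Res.J m ‖ξ₁ - ξ₂‖ := rfl
        rw [this] at hcond; linarith
      have h := HB ‖ξ₁‖ ‖ξ₂‖ ‖ξ₁ - ξ₂‖ (inner ℝ ξ₁ ξ₂ : ℝ) ha hb hd hba hrel hcs hcond2
      have hsc : c₀ * (max ‖ξ₁‖ 1 * max ‖ξ₂‖ 1)
            * (‖ξ₁‖ * ‖ξ₂‖ - (-(inner ℝ ξ₁ ξ₂ : ℝ)))
          ≤ (Res.J M ‖ξ₁‖ + Res.J M ‖ξ₂‖ - Res.J m ‖ξ₁ - ξ₂‖) * (‖ξ₁‖ * ‖ξ₂‖)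
            * Res.J 1 ‖ξ₁ - ξ₂‖ := by
        have e : ‖ξ₁‖ * ‖ξ₂‖ - (-(inner ℝ ξ₁ ξ₂ : ℝ)) = ‖ξ₁‖ * ‖ξ₂‖ + (inner ℝ ξ₁ ξ₂ : ℝ) := by
          ring
        rw [e]
        refine le_trans ?_ h
        exact mul_le_mul_of_nonneg_right
          (mul_le_mul_of_nonneg_right (min_le_right cA cB) hG0) (by linarith)
      exact Res.assemble c₀ _ hc₀ ha hb hθ hq hνz hsc
    · have hmin : min (jb M ξ₁) (jb M ξ₂) = Res.J M ‖ξ₁‖ :=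
        min_eq_left (Res.J_mono M ha.le hab)
      rw [hmin] at hcond
      have hcond2 : Res.J M ‖ξ₁‖ ≤ 1024 * Res.J m ‖ξ₁ - ξ₂‖ := by
        have : jb m (ξ₁ - ξ₂) = Res.J m ‖ξ₁ - ξ₂‖ := rfl
        rw [this] at hcond; linarith
      have hrel' : ‖ξ₁ - ξ₂‖ ^ 2 = ‖ξ₂‖ ^ 2 + ‖ξ₁‖ ^ 2 - 2 * (inner ℝ ξ₁ ξ₂ : ℝ) := by
        rw [hrel]; ring
      have hcs' : |(inner ℝ ξ₁ ξ₂ : ℝ)| ≤ ‖ξ₂‖ * ‖ξ₁‖ := by rwa [mul_comm]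
      have h := HB ‖ξ₂‖ ‖ξ₁‖ ‖ξ₁ - ξ₂‖ (inner ℝ ξ₁ ξ₂ : ℝ) hb ha hd hab hrel' hcs' hcond2
      have hsc : c₀ * (max ‖ξ₁‖ 1 * max ‖ξ₂‖ 1)
            * (‖ξ₁‖ * ‖ξ₂‖ - (-(inner ℝ ξ₁ ξ₂ : ℝ)))
          ≤ (Res.J M ‖ξ₁‖ + Res.J M ‖ξ₂‖ - Res.J m ‖ξ₁ - ξ₂‖) * (‖ξ₁‖ * ‖ξ₂‖)
            * Res.J 1 ‖ξ₁ - ξ₂‖ := by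
        calc c₀ * (max ‖ξ₁‖ 1 * max ‖ξ₂‖ 1) * (‖ξ₁‖ * ‖ξ₂‖ - (-(inner ℝ ξ₁ ξ₂ : ℝ)))
            = c₀ * (max ‖ξ₂‖ 1 * max ‖ξ₁‖ 1) * (‖ξ₂‖ * ‖ξ₁‖ + (inner ℝ ξ₁ ξ₂ : ℝ)) := by
              ring
        _ ≤ cB * (max ‖ξ₂‖ 1 * max ‖ξ₁‖ 1) * (‖ξ₂‖ * ‖ξ₁‖ + (inner ℝ ξ₁ ξ₂ : ℝ)) := by
              refine mul_le_mul_of_nonneg_right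
                (mul_le_mul_of_nonneg_right (min_le_right cA cB) ?_) (by linarith)
              exact mul_nonneg (le_trans zero_le_one (le_max_right _ _))
                (le_trans zero_le_one (le_max_right _ _))
        _ ≤ (Res.J M ‖ξ₂‖ + Res.J M ‖ξ₁‖ - Res.J m ‖ξ₁ - ξ₂‖) * (‖ξ₂‖ * ‖ξ₁‖)
              * Res.J 1 ‖ξ₁ - ξ₂‖ := h
        _ = (Res.J M ‖ξ₁‖ + Res.J M ‖ξ₂‖ - Res.J m ‖ξ₁ - ξ₂‖) * (‖ξ₁‖ * ‖ξ₂‖)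
              * Res.J 1 ‖ξ₁ - ξ₂‖ := by ring
      exact Res.assemble c₀ _ hc₀ ha hb hθ hq hνz hsc
  · -- (-1, -1)
    have hθ : (InnerProductGeometry.angle ((-1 : ℝ) • ξ₁) ((-1:ℝ) • ξ₂)) ^ 2
        ≤ Real.pi ^ 2 / 2 * (1 - (inner ℝ ξ₁ ξ₂ : ℝ) / (‖ξ₁‖ * ‖ξ₂‖)) := by
      rw [neg_one_smul, neg_one_smul, InnerProductGeometry.angle_neg_neg]
      exact Res.angle_bound ξ₁ ξ₂
    have hrel' : ‖ξ₁ - ξ₂‖ ^ 2 = ‖ξ₂‖ ^ 2 + ‖ξ₁‖ ^ 2 - 2 * (inner ℝ ξ₁ ξ₂ : ℝ) := by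
      rw [hrel]; ring
    have hcs' : |(inner ℝ ξ₁ ξ₂ : ℝ)| ≤ ‖ξ₂‖ * ‖ξ₁‖ := by rwa [mul_comm]
    have h := HA ‖ξ₂‖ ‖ξ₁‖ ‖ξ₁ - ξ₂‖ (inner ℝ ξ₁ ξ₂ : ℝ) hb ha hd hrel' hcs'
    have hsc : c₀ * (max ‖ξ₁‖ 1 * max ‖ξ₂‖ 1) * (‖ξ₁‖ * ‖ξ₂‖ - (inner ℝ ξ₁ ξ₂ : ℝ))
        ≤ (Res.J m ‖ξ₁ - ξ₂‖ + Res.J M ‖ξ₂‖ - Res.J M ‖ξ₁‖) * (‖ξ₁‖ * ‖ξ₂‖)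
          * Res.J 1 ‖ξ₁ - ξ₂‖ := by
      calc c₀ * (max ‖ξ₁‖ 1 * max ‖ξ₂‖ 1) * (‖ξ₁‖ * ‖ξ₂‖ - (inner ℝ ξ₁ ξ₂ : ℝ))
          = c₀ * (max ‖ξ₂‖ 1 * max ‖ξ₁‖ 1) * (‖ξ₂‖ * ‖ξ₁‖ - (inner ℝ ξ₁ ξ₂ : ℝ)) := by
            ring
      _ ≤ cA * (max ‖ξ₂‖ 1 * max ‖ξ₁‖ 1) * (‖ξ₂‖ * ‖ξ₁‖ - (inner ℝ ξ₁ ξ₂ : ℝ)) := by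
            refine mul_le_mul_of_nonneg_right
              (mul_le_mul_of_nonneg_right (min_le_left cA cB) ?_) (by linarith)
            exact mul_nonneg (le_trans zero_le_one (le_max_right _ _))
              (le_trans zero_le_one (le_max_right _ _))
      _ ≤ (Res.J m ‖ξ₁ - ξ₂‖ + Res.J M ‖ξ₂‖ - Res.J M ‖ξ₁‖) * (‖ξ₂‖ * ‖ξ₁‖)
            * Res.J 1 ‖ξ₁ - ξ₂‖ := h
      _ = (Res.J m ‖ξ₁ - ξ₂‖ + Res.J M ‖ξ₂‖ - Res.J M ‖ξ₁‖) * (‖ξ₁‖ * ‖ξ₂‖)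
            * Res.J 1 ‖ξ₁ - ξ₂‖ := by ring
    have hνz : Res.J m ‖ξ₁ - ξ₂‖ + Res.J M ‖ξ₂‖ - Res.J M ‖ξ₁‖
        ≤ |resonance m M (-1) (-1) ξ₁ ξ₂| := by
      have he : Res.J m ‖ξ₁ - ξ₂‖ + Res.J M ‖ξ₂‖ - Res.J M ‖ξ₁‖
          = resonance m M (-1) (-1) ξ₁ ξ₂ := by rw [hres]; ring
      rw [he]; exact le_abs_self _
    exact Res.assemble c₀ _ hc₀ ha hb hθ hp2 hνz hsc
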